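/- For all reals β_m > 0, β_I > 0, γ_t > 0 and K_I ≥ 0, the outage probability with NLoS (Rayleigh) main link and LoS (Rician with factor K_I) interference link satisfies ∫₀^∞ (1 - exp(-γ_t·β_I·g/β_m))·f_{K_I}(g) dg = 1 - (β_m/(2·γ_t·β_I + β_m))·exp( -2·γ_t·K_I·β_I/(2·γ_t·β_I + β_m) ). -/

import Mathlib

open MeasureTheory Real Set

/-- Modified Bessel function of the first kind, order zero:
`I₀(x) = ∑ (x²/4)ⁿ / (n!)²`. -/
noncomputable def besselI0 (x : ℝ) : ℝ :=
  ∑' n : ℕ, (x ^ 2 / 4) ^ n / ((Nat.factorial n : ℝ)) ^ 2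

/-- First-order Marcum Q-function:
`Q(a,b) = ∫_b^∞ x · exp(-(x²+a²)/2) · I₀(a·x) dx`. -/
noncomputable def marcumQ (a b : ℝ) : ℝ :=
  ∫ x in Set.Ioi b, x * Real.exp (-(x ^ 2 + a ^ 2) / 2) * besselI0 (a * x)

/-- Normalized Rician fading density with Rician factor `K`. -/
noncomputable def ricianPDF (K h : ℝ) : ℝ :=
  (1 / 2) * Real.exp (-K - h / 2) * besselI0 (Real.sqrt (2 * K * h))

lemma besselI0_summable (x : ℝ) :
    Summable (fun n : ℕ => (x ^ 2 / 4) ^ n / ((Nat.factorial n : ℝ)) ^ 2) := by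
  refine Summable.of_nonneg_of_le (fun n => by positivity) (fun n => ?_)
    (Real.summable_pow_div_factorial (x ^ 2 / 4))
  have h1 : (1 : ℝ) ≤ (Nat.factorial n : ℝ) := by
    exact_mod_cast Nat.one_le_iff_ne_zero.mpr (Nat.factorial_ne_zero n)
  have h0 : (0 : ℝ) ≤ (x ^ 2 / 4) ^ n := by positivity
  gcongr
  nlinarith

lemma besselI0_nonneg (x : ℝ) : 0 ≤ besselI0 x :=
  tsum_nonneg fun n => by positivity

lemma besselI0_le_exp {x : ℝ} (hx : 0 ≤ x) : besselI0 x ≤ Real.exp x := by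
  set a : ℕ → ℝ := fun n => (x / 2) ^ n / (Nat.factorial n : ℝ) with ha_def
  have ha : ∀ n, 0 ≤ a n := fun n => by simp only [ha_def]; positivity
  have hsa : Summable a := Real.summable_pow_div_factorial _
  have hC : ∑' n, a n = Real.exp (x / 2) := by
    rw [Real.exp_eq_exp_ℝ, NormedSpace.exp_eq_tsum_div]
  have key : besselI0 x = ∑' n, (a n) ^ 2 := by
    unfold besselI0
    refine tsum_congr fun n => ?_
    simp only [ha_def]
    rw [show x ^ 2 / 4 = (x / 2) ^ 2 by ring, ← pow_mul, mul_comm 2 n, pow_mul, div_pow]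
    ring
  have hle : ∀ n, (a n) ^ 2 ≤ a n * Real.exp (x / 2) := by
    intro n
    have h1 : a n ≤ Real.exp (x / 2) := hC ▸ Summable.le_tsum hsa n fun j _ => ha j
    rw [sq]
    exact mul_le_mul_of_nonneg_left h1 (ha n)
  have hs2 : Summable (fun n => (a n) ^ 2) :=
    Summable.of_nonneg_of_le (fun n => sq_nonneg _) hle (hsa.mul_right _)
  calc besselI0 x = ∑' n, (a n) ^ 2 := key
    _ ≤ ∑' n, a n * Real.exp (x / 2) := Summable.tsum_le_tsum hle hs2 (hsa.mul_right _)
    _ = (∑' n, a n) * Real.exp (x / 2) := tsum_mul_right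
    _ = Real.exp (x / 2) * Real.exp (x / 2) := by rw [hC]
    _ = Real.exp x := by rw [← Real.exp_add]; norm_num

lemma measurable_besselI0 : Measurable besselI0 := by
  apply measurable_of_tendsto_metrizable
    (f := fun N x => ∑ n ∈ Finset.range N, (x ^ 2 / 4) ^ n / ((Nat.factorial n : ℝ)) ^ 2)
  · intro N
    exact Finset.measurable_sum _ fun n _ =>
      (((measurable_id.pow_const 2).div_const 4).pow_const n).div_const _
  · rw [tendsto_pi_nhds]
    intro x
    exact (besselI0_summable x).hasSum.tendsto_sum_nat

lemma measurable_ricianPDF (K : ℝ) : Measurable (ricianPDF K) := by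
  unfold ricianPDF
  exact (measurable_const.mul (measurable_const.sub (measurable_id.div_const 2)).exp).mul
    (measurable_besselI0.comp (measurable_const_mul (2 * K)).sqrt)

lemma integrableOn_pow_exp {a : ℝ} (ha : 0 < a) (n : ℕ) :
    IntegrableOn (fun h : ℝ => h ^ n * Real.exp (-(a * h))) (Ioi (0 : ℝ)) := by
  have h := integrableOn_rpow_mul_exp_neg_mul_rpow (s := (n : ℝ)) (p := 1)
    (lt_of_lt_of_le (by norm_num) (Nat.cast_nonneg n)) one_pos ha
  refine h.congr_fun (fun x hx => ?_) measurableSet_Ioi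
  dsimp only
  rw [Real.rpow_one, Real.rpow_natCast, neg_mul]

lemma integral_pow_exp {a : ℝ} (ha : 0 < a) (n : ℕ) :
    ∫ h in Ioi (0 : ℝ), h ^ n * Real.exp (-(a * h)) = (Nat.factorial n : ℝ) / a ^ (n + 1) := by
  have h1 := Real.integral_rpow_mul_exp_neg_mul_Ioi (a := (n : ℝ) + 1) (r := a)
    (by positivity) ha
  rw [show ((n : ℝ) + 1) - 1 = (n : ℝ) by ring, Real.Gamma_nat_eq_factorial] at h1
  rw [show ((n : ℝ) + 1) = ((n + 1 : ℕ) : ℝ) by push_cast; ring, Real.rpow_natCast] at h1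
  have h2 : EqOn (fun x : ℝ => x ^ ((n : ℝ)) * Real.exp (-(a * x)))
      (fun x : ℝ => x ^ n * Real.exp (-(a * x))) (Ioi 0) := fun x _ => by
    simp [Real.rpow_natCast]
  rw [setIntegral_congr_fun measurableSet_Ioi h2] at h1
  rw [h1, one_div, inv_pow]
  field_simp

lemma rician_laplace (K s : ℝ) (hK : 0 ≤ K) (hs : 0 ≤ s) :
    ∫ h in Ioi (0 : ℝ), Real.exp (-(s * h)) * ricianPDF K h
      = (1 / (2 * s + 1)) * Real.exp (-(2 * s * K) / (2 * s + 1)) := by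
  set a : ℝ := s + 1 / 2 with ha_def
  have ha : 0 < a := by simp only [ha_def]; linarith
  set F : ℕ → ℝ → ℝ := fun n h =>
    ((1 : ℝ) / 2 * Real.exp (-K) * ((K / 2) ^ n / (Nat.factorial n : ℝ) ^ 2)) *
      (h ^ n * Real.exp (-(a * h))) with hF_def
  have hFint : ∀ n, Integrable (F n) (volume.restrict (Ioi 0)) := fun n =>
    (integrableOn_pow_exp ha n).const_mul _
  have hfac_pos : ∀ n : ℕ, (0 : ℝ) < (Nat.factorial n : ℝ) := fun n => by
    exact_mod_cast Nat.factorial_pos n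
  have hFval : ∀ n, ∫ h in Ioi (0 : ℝ), F n h
      = (1 / (2 * a)) * Real.exp (-K) * ((K / (2 * a)) ^ n / (Nat.factorial n : ℝ)) := by
    intro n
    simp only [hF_def]
    rw [MeasureTheory.integral_const_mul, integral_pow_exp ha n]
    have h1 := hfac_pos n
    rw [div_pow, div_pow, mul_pow]
    field_simp
    ring
  have hnonneg : ∀ n, ∀ h : ℝ, 0 < h → 0 ≤ F n h := by
    intro n h hh
    simp only [hF_def]
    have hK2 : (0 : ℝ) ≤ K / 2 := by linarith
    have h1 : (0:ℝ) ≤ (K/2)^n := pow_nonneg hK2 n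
    have h2 : (0:ℝ) ≤ h ^ n := pow_nonneg hh.le n
    positivity
  have hnorm : ∀ n, ∫ h in Ioi (0 : ℝ), ‖F n h‖ = ∫ h in Ioi (0 : ℝ), F n h := by
    intro n
    refine setIntegral_congr_fun measurableSet_Ioi fun h hh => ?_
    exact Real.norm_of_nonneg (hnonneg n h hh)
  have hsum : Summable (fun n => ∫ h in Ioi (0 : ℝ), ‖F n h‖) := by
    refine Summable.congr (((Real.summable_pow_div_factorial (K / (2 * a))).mul_left
      ((1 / (2 * a)) * Real.exp (-K)))) fun n => ?_
    rw [hnorm n, hFval n]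
  have hswap := MeasureTheory.integral_tsum_of_summable_integral_norm hFint hsum
  have heq : EqOn (fun h => Real.exp (-(s * h)) * ricianPDF K h)
      (fun h => ∑' n, F n h) (Ioi 0) := by
    intro h hh
    have hh0 : (0 : ℝ) < h := hh
    have h2 : Real.sqrt (2 * K * h) ^ 2 = 2 * K * h :=
      Real.sq_sqrt (by positivity)
    simp only [ricianPDF, besselI0, h2]
    rw [← tsum_mul_left, ← tsum_mul_left]
    refine tsum_congr fun n => ?_
    simp only [hF_def]
    have e1 : Real.exp (-(s * h)) * Real.exp (-K - h / 2)
        = Real.exp (-K) * Real.exp (-(a * h)) := by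
      rw [← Real.exp_add, ← Real.exp_add]
      congr 1
      simp only [ha_def]; ring
    have e2 : (2 * K * h / 4) ^ n = (K / 2) ^ n * h ^ n := by
      rw [← mul_pow]; congr 1; ring
    calc Real.exp (-(s * h)) * (1 / 2 * Real.exp (-K - h / 2) *
          ((2 * K * h / 4) ^ n / (Nat.factorial n : ℝ) ^ 2))
        = (Real.exp (-(s * h)) * Real.exp (-K - h / 2)) *
          (1 / 2 * ((2 * K * h / 4) ^ n / (Nat.factorial n : ℝ) ^ 2)) := by ring
      _ = (Real.exp (-K) * Real.exp (-(a * h))) *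
          (1 / 2 * ((K / 2) ^ n * h ^ n / (Nat.factorial n : ℝ) ^ 2)) := by rw [e1, e2]
      _ = 1 / 2 * Real.exp (-K) * ((K / 2) ^ n / (Nat.factorial n : ℝ) ^ 2) *
          (h ^ n * Real.exp (-(a * h))) := by ring
  rw [setIntegral_congr_fun measurableSet_Ioi heq, ← hswap, tsum_congr hFval, tsum_mul_left,
    show ∑' n : ℕ, (K / (2 * a)) ^ n / (Nat.factorial n : ℝ) = Real.exp (K / (2 * a)) from
      (by rw [Real.exp_eq_exp_ℝ, NormedSpace.exp_eq_tsum_div]),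
    mul_assoc, ← Real.exp_add]
  have h2a : 2 * a = 2 * s + 1 := by simp only [ha_def]; ring
  rw [h2a]
  congr 1
  have : (0:ℝ) < 2 * s + 1 := by linarith
  field_simp
  ring

lemma rician_integrableOn (K s : ℝ) (hK : 0 ≤ K) (hs : 0 ≤ s) :
    IntegrableOn (fun h => Real.exp (-(s * h)) * ricianPDF K h) (Ioi (0 : ℝ)) := by
  have hbound : IntegrableOn (fun h : ℝ => 1 / 2 * Real.exp K * Real.exp (-(1 / 4) * h))
      (Ioi (0 : ℝ)) :=
    (exp_neg_integrableOn_Ioi 0 (by norm_num : (0:ℝ) < 1 / 4)).const_mul _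
  have hmeas : AEStronglyMeasurable (fun h : ℝ => Real.exp (-(s * h)) * ricianPDF K h)
      (volume.restrict (Ioi (0:ℝ))) :=
    (((measurable_const_mul s).neg.exp.mul (measurable_ricianPDF K)).aestronglyMeasurable)
  refine Integrable.mono' hbound hmeas ?_
  refine (ae_restrict_iff' measurableSet_Ioi).mpr (Filter.Eventually.of_forall fun h hh => ?_)
  have hh0 : (0 : ℝ) < h := hh
  have hb0 : 0 ≤ besselI0 (Real.sqrt (2 * K * h)) := besselI0_nonneg _
  have hr0 : 0 ≤ ricianPDF K h := by
    unfold ricianPDF; positivity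
  have hf0 : 0 ≤ Real.exp (-(s * h)) * ricianPDF K h := by positivity
  rw [Real.norm_of_nonneg hf0]
  have h1 : Real.exp (-(s * h)) ≤ 1 := by
    rw [Real.exp_le_one_iff]
    nlinarith
  have hsqrt : Real.sqrt (2 * K * h) ≤ 2 * K + h / 4 := by
    have h2 : 2 * K * h ≤ (2 * K + h / 4) ^ 2 := by nlinarith [sq_nonneg (2 * K - h / 4)]
    calc Real.sqrt (2 * K * h) ≤ Real.sqrt ((2 * K + h / 4) ^ 2) := Real.sqrt_le_sqrt h2
      _ = 2 * K + h / 4 := Real.sqrt_sq (by linarith)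
  have h3 : besselI0 (Real.sqrt (2 * K * h)) ≤ Real.exp (2 * K + h / 4) :=
    le_trans (besselI0_le_exp (Real.sqrt_nonneg _)) (Real.exp_le_exp.mpr hsqrt)
  have h4 : ricianPDF K h ≤ 1 / 2 * Real.exp K * Real.exp (-(1 / 4) * h) := by
    unfold ricianPDF
    calc 1 / 2 * Real.exp (-K - h / 2) * besselI0 (Real.sqrt (2 * K * h))
        ≤ 1 / 2 * Real.exp (-K - h / 2) * Real.exp (2 * K + h / 4) := by
          have : (0:ℝ) < Real.exp (-K - h/2) := Real.exp_pos _
          nlinarith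
      _ = 1 / 2 * Real.exp K * Real.exp (-(1 / 4) * h) := by
          rw [mul_assoc, mul_assoc, ← Real.exp_add, ← Real.exp_add]
          congr 2
          ring
  calc Real.exp (-(s * h)) * ricianPDF K h ≤ 1 * ricianPDF K h := by
        exact mul_le_mul_of_nonneg_right h1 hr0
    _ = ricianPDF K h := one_mul _
    _ ≤ 1 / 2 * Real.exp K * Real.exp (-(1 / 4) * h) := h4

theorem stmt_6 (βm βI γt KI : ℝ) (hβm : 0 < βm) (hβI : 0 < βI) (hγt : 0 < γt)
    (hKI : 0 ≤ KI) :
    ∫ g in Set.Ioi (0 : ℝ),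
        (1 - Real.exp (-(γt * βI * g) / βm)) * ricianPDF KI g =
      1 - (βm / (2 * γt * βI + βm)) *
        Real.exp (-(2 * γt * KI * βI) / (2 * γt * βI + βm)) := by
  set c : ℝ := γt * βI / βm with hc_def
  have hc : 0 < c := by positivity
  have heq : EqOn (fun g => (1 - Real.exp (-(γt * βI * g) / βm)) * ricianPDF KI g)
      (fun g => Real.exp (-((0:ℝ) * g)) * ricianPDF KI g
        - Real.exp (-(c * g)) * ricianPDF KI g) (Ioi 0) := by
    intro g _
    have h1 : -(γt * βI * g) / βm = -(c * g) := by
      simp only [hc_def]; ring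
    simp only
    rw [h1]
    simp only [zero_mul, neg_zero, Real.exp_zero, one_mul]
    ring
  rw [setIntegral_congr_fun measurableSet_Ioi heq,
    integral_sub (rician_integrableOn KI 0 hKI le_rfl) (rician_integrableOn KI c hKI hc.le),
    rician_laplace KI 0 hKI le_rfl, rician_laplace KI c hKI hc.le]
  have h2c : 2 * c + 1 = (2 * γt * βI + βm) / βm := by
    simp only [hc_def]; field_simp
  have hden : (0:ℝ) < 2 * γt * βI + βm := by positivity
  norm_num
  rw [h2c]
  congr 1
  · field_simp
  · congr 1
    simp only [hc_def]
    field_simp
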